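/- (Generalized small-ball implies weakened small-ball) Let S be a nonnegative random variable with E[S] > 0 and suppose P(S ≥ C₁ E[S]) ≥ C₂ for constants C₁ > 0, C₂ ∈ (0, 1]. Then E[S · 1{S < (2/C₂) E[S]}] ≥ (C₁C₂/2) E[S]. -/

import Mathlib

open MeasureTheory Real

/-- Generalized small-ball implies weakened small-ball: if `S ≥ 0`, `E[S] > 0` and
`P(S ≥ C₁ E[S]) ≥ C₂` with `C₁ > 0`, `C₂ ∈ (0,1]`, then
`E[S · 1{S < (2/C₂) E[S]}] ≥ (C₁C₂/2) E[S]`. -/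
theorem small_ball_implies_weakened_small_ball
    {Ω : Type*} [MeasurableSpace Ω] (μ : Measure Ω) [IsProbabilityMeasure μ]
    (S : Ω → ℝ) (hSmeas : Measurable S) (hSnn : ∀ᵐ ω ∂μ, 0 ≤ S ω)
    (hS : Integrable S μ) (hpos : 0 < ∫ ω, S ω ∂μ)
    {C₁ C₂ : ℝ} (hC₁ : 0 < C₁) (hC₂0 : 0 < C₂) (hC₂1 : C₂ ≤ 1)
    (hsb : ENNReal.ofReal C₂ ≤ μ {ω | C₁ * ∫ ω', S ω' ∂μ ≤ S ω}) :
    (C₁ * C₂ / 2) * ∫ ω, S ω ∂μ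
      ≤ ∫ ω, (if S ω < (2 / C₂) * ∫ ω', S ω' ∂μ then S ω else 0) ∂μ := by
  set m := ∫ ω, S ω ∂μ with hm
  set t := (2 / C₂) * m with ht
  have htpos : 0 < t := by
    have : 0 < m := hpos
    positivity
  set A := {ω | C₁ * m ≤ S ω} with hAdef
  set B := {ω | S ω < t} with hBdef
  have hA : MeasurableSet A := measurableSet_le measurable_const hSmeas
  have hB : MeasurableSet B := measurableSet_lt hSmeas measurable_const
  -- Markov's inequality
  have hmar : t * (μ {ω | t ≤ S ω}).toReal ≤ m :=
    mul_meas_ge_le_integral_of_nonneg hSnn hS t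
  have hBc : (μ {ω | t ≤ S ω}).toReal ≤ C₂ / 2 := by
    have hkey : t * (C₂ / 2) = m := by
      rw [ht]; field_simp
    have : t * (μ {ω | t ≤ S ω}).toReal ≤ t * (C₂ / 2) := by rw [hkey]; exact hmar
    exact le_of_mul_le_mul_left this htpos
  -- measure of A ∩ B
  have hAsub : A ⊆ (A ∩ B) ∪ {ω | t ≤ S ω} := by
    intro ω hω
    by_cases h : S ω < t
    · exact Or.inl ⟨hω, h⟩
    · exact Or.inr (not_lt.mp h)
  have hAreal : C₂ ≤ (μ A).toReal := by
    have h1 : (ENNReal.ofReal C₂).toReal ≤ (μ A).toReal :=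
      ENNReal.toReal_mono (measure_ne_top μ A) hsb
    rwa [ENNReal.toReal_ofReal hC₂0.le] at h1
  have hmeas_sum : (μ A).toReal ≤ (μ (A ∩ B)).toReal + (μ {ω | t ≤ S ω}).toReal := by
    have h1 : μ A ≤ μ (A ∩ B) + μ {ω | t ≤ S ω} :=
      le_trans (measure_mono hAsub) (measure_union_le _ _)
    have h2 := ENNReal.toReal_mono (by finiteness) h1
    rwa [ENNReal.toReal_add (measure_ne_top _ _) (measure_ne_top _ _)] at h2
  have hAB : C₂ / 2 ≤ (μ (A ∩ B)).toReal := by linarith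
  -- integrability
  have hfun : (fun ω => if S ω < t then S ω else 0) = B.indicator S := by
    ext ω; simp [Set.indicator_apply, hBdef, Set.mem_setOf_eq]
  have hint1 : Integrable (fun ω => if S ω < t then S ω else 0) μ := by
    rw [hfun]; exact hS.indicator hB
  have hint2 : Integrable ((A ∩ B).indicator fun _ => C₁ * m) μ :=
    (integrable_const _).indicator (hA.inter hB)
  have hle : ∀ᵐ ω ∂μ, (A ∩ B).indicator (fun _ => C₁ * m) ω
      ≤ (if S ω < t then S ω else 0) := by
    filter_upwards [hSnn] with ω hω
    by_cases h : ω ∈ A ∩ B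
    · rw [Set.indicator_of_mem h]
      have h2 : S ω < t := h.2
      rw [if_pos h2]
      exact h.1
    · rw [Set.indicator_of_notMem h]
      split <;> simp [hω]
  have hmono : ∫ ω, (A ∩ B).indicator (fun _ => C₁ * m) ω ∂μ
      ≤ ∫ ω, (if S ω < t then S ω else 0) ∂μ :=
    integral_mono_ae hint2 hint1 hle
  have hind : ∫ ω, (A ∩ B).indicator (fun _ => C₁ * m) ω ∂μ
      = (μ (A ∩ B)).toReal * (C₁ * m) := by
    rw [integral_indicator_const _ (hA.inter hB)]; simp [smul_eq_mul, Measure.real]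
  have hfinal : (C₁ * C₂ / 2) * m ≤ ∫ ω, (A ∩ B).indicator (fun _ => C₁ * m) ω ∂μ := by
    rw [hind]
    have h1 : (C₂ / 2) * (C₁ * m) ≤ (μ (A ∩ B)).toReal * (C₁ * m) := by
      apply mul_le_mul_of_nonneg_right hAB
      positivity
    nlinarith
  linarith
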